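/- Let B, c₂, c₃ ∈ ℝ and define P(α,β) := 1/(4π) − (3/(8π)) sin²β cos(2α) · B + [ (3/(16π)) sin⁴β cos(4α) + c₂ sin²β cos(2α) + c₃ sin²β sin(2α) ] · B². Then, with d(α,β) = (cos α sin β, sin α sin β, cos β), the second normal stress integral satisfies ∫₀^{2π} ∫₀^{π} ( d₂(α,β)² − d₃(α,β)² ) P(α,β) sin β dβ dα = (1/5) B − (8π/15) c₂ B². -/

import Mathlib

open MeasureTheory intervalIntegral

/-- The truncated asymptotic expansion (in the Bretherton constant `B`) of the
steady-state orientation distribution. -/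
noncomputable def Pexp (B c₂ c₃ α β : ℝ) : ℝ :=
  1 / (4 * Real.pi)
    - 3 / (8 * Real.pi) * Real.sin β ^ 2 * Real.cos (2 * α) * B
    + (3 / (16 * Real.pi) * Real.sin β ^ 4 * Real.cos (4 * α)
        + c₂ * Real.sin β ^ 2 * Real.cos (2 * α)
        + c₃ * Real.sin β ^ 2 * Real.sin (2 * α)) * B ^ 2

/-- Value of the inner (β) integral, as a function of α. -/
noncomputable def fA (B c₂ c₃ α : ℝ) : ℝ :=
  (-1/6)*(1/Real.pi) + (-1/35)*Real.cos (4*α)*B*B*(1/Real.pi)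
    + (-4/15)*Real.sin (2*α)*B*B*c₃ + (1/10)*Real.cos (2*α)*B*(1/Real.pi)
    + (-4/15)*Real.cos (2*α)*B*B*c₂ + (1/3)*Real.sin α ^ 2*(1/Real.pi)
    + (6/35)*Real.sin α ^ 2*Real.cos (4*α)*B*B*(1/Real.pi)
    + (16/15)*Real.sin α ^ 2*Real.sin (2*α)*B*B*c₃
    + (-2/5)*Real.sin α ^ 2*Real.cos (2*α)*B*(1/Real.pi)
    + (16/15)*Real.sin α ^ 2*Real.cos (2*α)*B*B*c₂

lemma inner_eq (B c₂ c₃ α : ℝ) :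
    (∫ β in (0:ℝ)..Real.pi,
        ((Real.sin α * Real.sin β) ^ 2 - Real.cos β ^ 2)
          * Pexp B c₂ c₃ α β * Real.sin β) = fA B c₂ c₃ α := by
  set h1 : ℝ := (1/4)*Real.sin α ^ 2*(1/Real.pi)
      + (3/16)*Real.sin α ^ 2*Real.cos (4*α)*B*B*(1/Real.pi)
      + Real.sin α ^ 2*Real.sin (2*α)*B*B*c₃
      + (-3/8)*Real.sin α ^ 2*Real.cos (2*α)*B*(1/Real.pi)
      + Real.sin α ^ 2*Real.cos (2*α)*B*B*c₂ with hh1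
  set h3 : ℝ := (-1/12)*(1/Real.pi) + (-1/16)*Real.cos (4*α)*B*B*(1/Real.pi)
      + (-1/3)*Real.sin (2*α)*B*B*c₃ + (1/8)*Real.cos (2*α)*B*(1/Real.pi)
      + (-1/3)*Real.cos (2*α)*B*B*c₂ + (-1/12)*Real.sin α ^ 2*(1/Real.pi)
      + (-3/16)*Real.sin α ^ 2*Real.cos (4*α)*B*B*(1/Real.pi)
      + (-2/3)*Real.sin α ^ 2*Real.sin (2*α)*B*B*c₃
      + (1/4)*Real.sin α ^ 2*Real.cos (2*α)*B*(1/Real.pi)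
      + (-2/3)*Real.sin α ^ 2*Real.cos (2*α)*B*B*c₂ with hh3
  set h5 : ℝ := (3/40)*Real.cos (4*α)*B*B*(1/Real.pi) + (1/5)*Real.sin (2*α)*B*B*c₃
      + (-3/40)*Real.cos (2*α)*B*(1/Real.pi) + (1/5)*Real.cos (2*α)*B*B*c₂
      + (9/80)*Real.sin α ^ 2*Real.cos (4*α)*B*B*(1/Real.pi)
      + (1/5)*Real.sin α ^ 2*Real.sin (2*α)*B*B*c₃
      + (-3/40)*Real.sin α ^ 2*Real.cos (2*α)*B*(1/Real.pi)
      + (1/5)*Real.sin α ^ 2*Real.cos (2*α)*B*B*c₂ with hh5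
  set h7 : ℝ := (-3/112)*Real.cos (4*α)*B*B*(1/Real.pi)
      + (-3/112)*Real.sin α ^ 2*Real.cos (4*α)*B*B*(1/Real.pi) with hh7
  have key : ∀ β ∈ Set.uIcc (0:ℝ) Real.pi,
      HasDerivAt (fun x : ℝ => -(h1 * Real.cos x + h3 * Real.cos x ^ 3
          + h5 * Real.cos x ^ 5 + h7 * Real.cos x ^ 7))
        (((Real.sin α * Real.sin β) ^ 2 - Real.cos β ^ 2)
          * Pexp B c₂ c₃ α β * Real.sin β) β := by
    intro β _
    have hc := Real.hasDerivAt_cos β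
    have hd : HasDerivAt (fun x : ℝ => -(h1 * Real.cos x + h3 * Real.cos x ^ 3
          + h5 * Real.cos x ^ 5 + h7 * Real.cos x ^ 7))
        (-(h1 * (-Real.sin β)
          + h3 * (3 * Real.cos β ^ 2 * (-Real.sin β))
          + h5 * (5 * Real.cos β ^ 4 * (-Real.sin β))
          + h7 * (7 * Real.cos β ^ 6 * (-Real.sin β)))) β := by
      have p3 := (hc.pow 3).const_mul h3
      have p5 := (hc.pow 5).const_mul h5
      have p7 := (hc.pow 7).const_mul h7
      have p1 := hc.const_mul h1
      have := (((p1.add p3).add p5).add p7).neg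
      exact this.congr_deriv (by norm_num)
    convert hd using 1
    simp only [Pexp, hh1, hh3, hh5, hh7]
    have hc2 : Real.cos β ^ 2 = 1 - Real.sin β ^ 2 := Real.cos_sq' β
    rw [show Real.cos β ^ 4 = (Real.cos β ^ 2) ^ 2 by ring,
        show Real.cos β ^ 6 = (Real.cos β ^ 2) ^ 3 by ring, hc2]
    ring
  have hint : IntervalIntegrable
      (fun β => ((Real.sin α * Real.sin β) ^ 2 - Real.cos β ^ 2)
          * Pexp B c₂ c₃ α β * Real.sin β) volume 0 Real.pi := by
    apply Continuous.intervalIntegrable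
    simp only [Pexp]
    fun_prop
  rw [intervalIntegral.integral_eq_sub_of_hasDerivAt key hint]
  simp only [Real.cos_pi, Real.cos_zero, fA, hh1, hh3, hh5, hh7]
  ring

lemma outer_eq (B c₂ c₃ : ℝ) :
    (∫ α in (0:ℝ)..(2 * Real.pi), fA B c₂ c₃ α)
      = 1 / 5 * B - 8 * Real.pi / 15 * c₂ * B ^ 2 := by
  set K : ℝ := (1/10)*B*(1/Real.pi) + (-4/15)*B*B*c₂ with hK
  set a2 : ℝ := (-1/6)*(1/Real.pi) + (-1/10)*B*(1/Real.pi)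
      + (-3/70)*B*B*(1/Real.pi) + (4/15)*B*B*c₂ with ha2
  set b2 : ℝ := (4/15)*B*B*c₃ with hb2
  set a4 : ℝ := (1/10)*B*(1/Real.pi) + (2/35)*B*B*(1/Real.pi) + (-4/15)*B*B*c₂ with ha4
  set b4 : ℝ := (-4/15)*B*B*c₃ with hb4
  set a6 : ℝ := (-3/70)*B*B*(1/Real.pi) with ha6
  have key : ∀ α ∈ Set.uIcc (0:ℝ) (2 * Real.pi),
      HasDerivAt (fun x : ℝ => K * x + a2/2 * Real.sin (2*x) - b2/2 * Real.cos (2*x)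
          + a4/4 * Real.sin (4*x) - b4/4 * Real.cos (4*x) + a6/6 * Real.sin (6*x))
        (fA B c₂ c₃ α) α := by
    intro α _
    have l2 : HasDerivAt (fun x : ℝ => (2:ℝ) * x) 2 α := by
      simpa using (hasDerivAt_id α).const_mul (2:ℝ)
    have l4 : HasDerivAt (fun x : ℝ => (4:ℝ) * x) 4 α := by
      simpa using (hasDerivAt_id α).const_mul (4:ℝ)
    have l6 : HasDerivAt (fun x : ℝ => (6:ℝ) * x) 6 α := by
      simpa using (hasDerivAt_id α).const_mul (6:ℝ)
    have s2 : HasDerivAt (fun x : ℝ => Real.sin (2*x)) (Real.cos (2*α) * 2) α :=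
      (Real.hasDerivAt_sin (2*α)).comp α l2
    have c2' : HasDerivAt (fun x : ℝ => Real.cos (2*x)) (-Real.sin (2*α) * 2) α :=
      (Real.hasDerivAt_cos (2*α)).comp α l2
    have s4 : HasDerivAt (fun x : ℝ => Real.sin (4*x)) (Real.cos (4*α) * 4) α :=
      (Real.hasDerivAt_sin (4*α)).comp α l4
    have c4' : HasDerivAt (fun x : ℝ => Real.cos (4*x)) (-Real.sin (4*α) * 4) α :=
      (Real.hasDerivAt_cos (4*α)).comp α l4
    have s6 : HasDerivAt (fun x : ℝ => Real.sin (6*x)) (Real.cos (6*α) * 6) α :=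
      (Real.hasDerivAt_sin (6*α)).comp α l6
    have hd : HasDerivAt (fun x : ℝ => K * x + a2/2 * Real.sin (2*x)
          - b2/2 * Real.cos (2*x) + a4/4 * Real.sin (4*x) - b4/4 * Real.cos (4*x)
          + a6/6 * Real.sin (6*x))
        (K * 1 + a2/2 * (Real.cos (2*α) * 2) - b2/2 * (-Real.sin (2*α) * 2)
          + a4/4 * (Real.cos (4*α) * 4) - b4/4 * (-Real.sin (4*α) * 4)
          + a6/6 * (Real.cos (6*α) * 6)) α := by
      exact ((((((hasDerivAt_id α).const_mul K).add (s2.const_mul (a2/2))).sub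
        (c2'.const_mul (b2/2))).add (s4.const_mul (a4/4))).sub
        (c4'.const_mul (b4/4))).add (s6.const_mul (a6/6)) |>.congr_deriv (by ring)
    convert hd using 1
    have h4c : Real.cos (4*α) = 2 * Real.cos (2*α) ^ 2 - 1 := by
      rw [show (4:ℝ)*α = 2*(2*α) by ring, Real.cos_two_mul]
    have h4s : Real.sin (4*α) = 2 * Real.sin (2*α) * Real.cos (2*α) := by
      rw [show (4:ℝ)*α = 2*(2*α) by ring, Real.sin_two_mul]
    have h6c : Real.cos (6*α)
        = Real.cos (2*α) * Real.cos (4*α) - Real.sin (2*α) * Real.sin (4*α) := by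
      rw [show (6:ℝ)*α = 2*α + 4*α by ring, Real.cos_add]
    have hsa : Real.sin α ^ 2 = 1/2 - Real.cos (2*α)/2 := by
      have := Real.cos_two_mul α
      have h := Real.sin_sq_add_cos_sq α
      nlinarith [h, this]
    simp only [fA, hK, ha2, hb2, ha4, hb4, ha6, h6c, h4s, h4c, hsa]
    linear_combination (2 * ((-3:ℝ)/70)*B*B*(1/Real.pi) * Real.cos (2*α))
      * Real.sin_sq_add_cos_sq (2*α)
  have hint : IntervalIntegrable (fun α => fA B c₂ c₃ α) volume 0 (2 * Real.pi) := by
    apply Continuous.intervalIntegrable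
    simp only [fA]
    fun_prop
  rw [intervalIntegral.integral_eq_sub_of_hasDerivAt key hint]
  have h2 : Real.sin (2 * (2 * Real.pi)) = 0 := by
    rw [show (2:ℝ) * (2 * Real.pi) = (4:ℕ) * Real.pi by push_cast; ring]
    exact Real.sin_nat_mul_pi 4
  have h4 : Real.sin (4 * (2 * Real.pi)) = 0 := by
    rw [show (4:ℝ) * (2 * Real.pi) = (8:ℕ) * Real.pi by push_cast; ring]
    exact Real.sin_nat_mul_pi 8
  have h6 : Real.sin (6 * (2 * Real.pi)) = 0 := by
    rw [show (6:ℝ) * (2 * Real.pi) = (12:ℕ) * Real.pi by push_cast; ring]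
    exact Real.sin_nat_mul_pi 12
  have hc2 : Real.cos (2 * (2 * Real.pi)) = 1 := by
    rw [show (2:ℝ) * (2 * Real.pi) = (2:ℕ) * (2 * Real.pi) by push_cast; ring]
    exact Real.cos_nat_mul_two_pi 2
  have hc4 : Real.cos (4 * (2 * Real.pi)) = 1 := by
    rw [show (4:ℝ) * (2 * Real.pi) = (4:ℕ) * (2 * Real.pi) by push_cast; ring]
    exact Real.cos_nat_mul_two_pi 4
  have hpi : Real.pi ≠ 0 := Real.pi_ne_zero
  simp only [h2, h4, h6, hc2, hc4, Real.sin_zero, Real.cos_zero, mul_zero, mul_one]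
  field_simp
  linear_combination (B * 120) * mul_inv_cancel₀ hpi

/-- The second normal stress integral: the sphere average of
`d₂² − d₃²` against the truncated expansion `P` equals
`(1/5)B − (8π/15) c₂ B²`. -/
theorem second_normal_stress_average (B c₂ c₃ : ℝ) :
    (∫ α in (0:ℝ)..(2 * Real.pi), ∫ β in (0:ℝ)..Real.pi,
        ((Real.sin α * Real.sin β) ^ 2 - Real.cos β ^ 2)
          * Pexp B c₂ c₃ α β * Real.sin β)
      = 1 / 5 * B - 8 * Real.pi / 15 * c₂ * B ^ 2 := by
  simp only [inner_eq]
  exact outer_eq B c₂ c₃
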